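/- For all real T, the limit as p tends to 1 from below of the infimum over q in [0,1] of D_bin(q‖p) + q·T equals T, where D_bin(q‖p) = q·log2(q/p) + (1−q)·log2((1−q)/(1−p)) is the binary relative entropy (with the conventions 0·log 0 = 0). -/

import Mathlib

open Filter Set

/-- Binary relative entropy (base 2), with the convention `0 · log 0 = 0`
(automatic since `Real.log 0 = 0`). -/
noncomputable def Dbin (q p : ℝ) : ℝ :=
  q * Real.logb 2 (q / p) + (1 - q) * Real.logb 2 ((1 - q) / (1 - p))

lemma mul_log_ge (s : ℝ) (h0 : 0 ≤ s) : -2 * Real.sqrt s ≤ s * Real.log s := by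
  rcases eq_or_lt_of_le h0 with h | h
  · simp [← h]
  · have hs : Real.sqrt s > 0 := Real.sqrt_pos.mpr h
    have h1 : Real.log (Real.sqrt s) ≥ 1 - (Real.sqrt s)⁻¹ := by
      have := Real.log_le_sub_one_of_pos (inv_pos.mpr hs)
      rw [Real.log_inv] at this
      linarith
    have h2 : Real.log s = 2 * Real.log (Real.sqrt s) := by
      rw [Real.log_sqrt h0]; ring
    have h3 : s * Real.log s ≥ s * (2 * (1 - (Real.sqrt s)⁻¹)) := by
      apply mul_le_mul_of_nonneg_left (by linarith) h0
    have h4 : s * (Real.sqrt s)⁻¹ = Real.sqrt s := by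
      rw [← Real.div_sqrt]; field_simp; exact Real.sq_sqrt h0
    nlinarith [Real.sqrt_nonneg s]

lemma one_sub_mul_log (s : ℝ) (h1 : s ≤ 1) :
    -s ≤ (1 - s) * Real.log (1 - s) := by
  rcases eq_or_lt_of_le h1 with h | h
  · simp [← h]; linarith
  · have hpos : 0 < 1 - s := by linarith
    have hl : Real.log (1 - s) ≥ 1 - (1 - s)⁻¹ := by
      have := Real.log_le_sub_one_of_pos (inv_pos.mpr hpos)
      rw [Real.log_inv] at this; linarith
    have : (1 - s) * Real.log (1 - s) ≥ (1 - s) * (1 - (1 - s)⁻¹) :=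
      mul_le_mul_of_nonneg_left hl (le_of_lt hpos)
    have he : (1 - s) * (1 - (1 - s)⁻¹) = -s := by field_simp; ring
    linarith

lemma g_bound (s M : ℝ) (h0 : 0 ≤ s) (h1 : s ≤ 1) (hM : 2 ≤ M) :
    -3 * Real.exp (-M / 4) ≤ (1 - s) * Real.log (1 - s) + s * Real.log s + s * M := by
  have ha : (0:ℝ) < Real.exp (-M / 2) := Real.exp_pos _
  have hsqrt : Real.sqrt (Real.exp (-M / 2)) = Real.exp (-M / 4) := by
    rw [show (-M/2 : ℝ) = (-M/4) + (-M/4) by ring, Real.exp_add]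
    exact Real.sqrt_mul_self (le_of_lt (Real.exp_pos _))
  have hhelp := one_sub_mul_log s h1
  rcases le_or_gt (Real.exp (-M / 2)) s with hc | hc
  · have hls : Real.log s ≥ -M / 2 := by
      calc Real.log s ≥ Real.log (Real.exp (-M/2)) :=
        Real.log_le_log (Real.exp_pos _) hc
      _ = -M/2 := Real.log_exp _
    have : s * Real.log s ≥ s * (-M/2) := mul_le_mul_of_nonneg_left hls h0
    nlinarith [Real.exp_pos (-M/4)]
  · have hss : Real.sqrt s ≤ Real.exp (-M/4) := by
      rw [← hsqrt]; exact Real.sqrt_le_sqrt (le_of_lt hc)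
    have h2 := mul_log_ge s h0
    have hsM : 0 ≤ s * M := mul_nonneg h0 (by linarith)
    have hsa : s ≤ Real.exp (-M/4) := by
      calc s ≤ Real.exp (-M/2) := le_of_lt hc
      _ ≤ Real.exp (-M/4) := Real.exp_le_exp.mpr (by linarith)
    linarith

lemma pointwise_bound (T p q : ℝ) (hp0 : 0 < p) (hp1 : p < 1) (hq0 : 0 ≤ q) (hq1 : q ≤ 1)
    (hM : 2 ≤ -Real.log (1 - p) - T * Real.log 2) :
    T - 3 * Real.exp (-(-Real.log (1 - p) - T * Real.log 2) / 4) / Real.log 2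
      ≤ Dbin q p + q * T := by
  set M := -Real.log (1 - p) - T * Real.log 2 with hMdef
  have hlog2 : (0:ℝ) < Real.log 2 := Real.log_pos one_lt_two
  have hgb := g_bound (1 - q) M (by linarith) (by linarith) hM
  -- first term bound
  have hterm1 : q * Real.log q ≤ q * Real.log (q / p) := by
    rcases eq_or_lt_of_le hq0 with h | h
    · simp [← h]
    · rw [Real.log_div (ne_of_gt h) (ne_of_gt hp0)]
      have hlp : Real.log p < 0 := Real.log_neg hp0 hp1
      nlinarith
  have hterm2 : (1 - q) * Real.log ((1 - q) / (1 - p))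
      = (1 - q) * Real.log (1 - q) - (1 - q) * Real.log (1 - p) := by
    rcases eq_or_lt_of_le hq1 with h | h
    · simp [h]
    · rw [Real.log_div (by linarith) (by linarith)]; ring
  have key : T * Real.log 2 - 3 * Real.exp (-M / 4)
      ≤ q * Real.log (q / p) + (1 - q) * Real.log ((1 - q) / (1 - p)) + q * T * Real.log 2 := by
    have h1 : (1 - (1 - q)) * Real.log (1 - (1 - q)) = q * Real.log q := by ring_nf
    rw [hterm2]
    nlinarith [hgb]
  have hfinal : T - 3 * Real.exp (-M / 4) / Real.log 2
      = (T * Real.log 2 - 3 * Real.exp (-M / 4)) / Real.log 2 := by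
    field_simp
  rw [hfinal]
  have : Dbin q p + q * T
      = (q * Real.log (q / p) + (1 - q) * Real.log ((1 - q) / (1 - p)) + q * T * Real.log 2)
        / Real.log 2 := by
    simp only [Dbin, Real.logb]
    field_simp
  rw [this]
  exact div_le_div_of_nonneg_right key hlog2.le


lemma Dbin_one (p : ℝ) (_hp0 : 0 < p) : Dbin 1 p = - Real.logb 2 p := by
  simp [Dbin, one_div, Real.logb_inv]

/-- For all real `T`, the limit as `p → 1⁻` of `inf_{q ∈ [0,1]} (D_bin(q‖p) + q·T)` equals `T`. -/
theorem limit_inf_Dbin_add_linear (T : ℝ) :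
    Tendsto (fun p : ℝ => ⨅ q : Set.Icc (0:ℝ) 1, (Dbin q p + (q : ℝ) * T))
      (nhdsWithin 1 (Set.Iio 1)) (nhds T) := by
  have hD1 : ∀ p : ℝ, 0 < p → Dbin 1 p = - Real.logb 2 p := Dbin_one
  have hlog2 : (0:ℝ) < Real.log 2 := Real.log_pos one_lt_two
  set M : ℝ → ℝ := fun p => -Real.log (1 - p) - T * Real.log 2 with hMdef
  have hsub : Tendsto (fun p:ℝ => 1 - p) (nhdsWithin 1 (Set.Iio 1)) (nhdsWithin 0 (Set.Ioi 0)) := by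
    apply tendsto_nhdsWithin_of_tendsto_nhds_of_eventually_within
    · have h : Tendsto (fun p:ℝ => 1 - p) (nhds 1) (nhds 0) := by
        have hc : Continuous (fun p:ℝ => 1 - p) := by continuity
        simpa using hc.tendsto (1:ℝ)
      exact h.mono_left nhdsWithin_le_nhds
    · filter_upwards [self_mem_nhdsWithin] with p hp
      simp only [mem_Iio] at hp
      simp only [mem_Ioi]; linarith
  have hlogbot : Tendsto (fun p:ℝ => Real.log (1-p)) (nhdsWithin 1 (Set.Iio 1)) atBot :=
    Real.tendsto_log_nhdsGT_zero.comp hsub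
  have hMtop : Tendsto M (nhdsWithin 1 (Set.Iio 1)) atTop := by
    have h1 : Tendsto (fun p:ℝ => -Real.log (1-p)) (nhdsWithin 1 (Set.Iio 1)) atTop :=
      tendsto_neg_atBot_atTop.comp hlogbot
    have := tendsto_atTop_add_const_right _ (-(T * Real.log 2)) h1
    simpa [hMdef, sub_eq_add_neg] using this
  have hexp : Tendsto (fun p => Real.exp (-(M p)/4)) (nhdsWithin 1 (Set.Iio 1)) (nhds 0) := by
    apply Real.tendsto_exp_atBot.comp
    have h2 : Tendsto (fun p => -(M p)) (nhdsWithin 1 (Set.Iio 1)) atBot :=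
      tendsto_neg_atTop_atBot.comp hMtop
    exact h2.atBot_div_const (by norm_num)
  have hLo : Tendsto (fun p => T - 3 * Real.exp (-(M p)/4) / Real.log 2)
      (nhdsWithin 1 (Set.Iio 1)) (nhds T) := by
    have h3 := ((hexp.const_mul 3)).div_const (Real.log 2)
    have h4 := (tendsto_const_nhds : Tendsto (fun _:ℝ => T) (nhdsWithin 1 (Set.Iio 1)) (nhds T)).sub h3
    simpa using h4
  have hUp : Tendsto (fun p:ℝ => T - Real.logb 2 p) (nhdsWithin 1 (Set.Iio 1)) (nhds T) := by
    have hcont : Tendsto (fun p:ℝ => Real.logb 2 p) (nhds 1) (nhds 0) := by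
      have h := (Real.continuousAt_log one_ne_zero).tendsto
      simp only [Real.log_one] at h
      have := h.div_const (Real.log 2)
      simpa [Real.logb] using this
    have h4 := (tendsto_const_nhds : Tendsto (fun _:ℝ => T) (nhdsWithin 1 (Set.Iio 1)) (nhds T)).sub (hcont.mono_left nhdsWithin_le_nhds)
    simpa using h4
  have hev : ∀ᶠ p in nhdsWithin (1:ℝ) (Set.Iio 1), 0 < p ∧ p < 1 ∧ 2 ≤ M p := by
    have h0 : ∀ᶠ p in nhdsWithin (1:ℝ) (Set.Iio 1), (0:ℝ) < p :=
      eventually_nhdsWithin_of_eventually_nhds (eventually_gt_nhds one_pos)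
    filter_upwards [h0, self_mem_nhdsWithin, hMtop.eventually_ge_atTop 2] with p h1 h2 h3
    exact ⟨h1, h2, h3⟩
  apply tendsto_of_tendsto_of_tendsto_of_le_of_le' hLo hUp
  · filter_upwards [hev] with p ⟨hp0, hp1, hpM⟩
    exact le_ciInf fun q => pointwise_bound T p q hp0 hp1 q.2.1 q.2.2 hpM
  · filter_upwards [hev] with p ⟨hp0, hp1, hpM⟩
    have hb : BddBelow (Set.range fun q : Set.Icc (0:ℝ) 1 => Dbin q p + (q:ℝ) * T) := by
      refine ⟨T - 3 * Real.exp (-(M p)/4) / Real.log 2, ?_⟩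
      rintro x ⟨q, rfl⟩
      exact pointwise_bound T p q hp0 hp1 q.2.1 q.2.2 hpM
    have h1 := ciInf_le hb (⟨1, by simp⟩ : Set.Icc (0:ℝ) 1)
    calc (⨅ q : Set.Icc (0:ℝ) 1, (Dbin q p + (q : ℝ) * T)) ≤ Dbin 1 p + 1 * T := h1
    _ = T - Real.logb 2 p := by have := hD1 p hp0; rw [this]; ring
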